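/- Let G be the free group on three generators α, β, γ, let H ⊆ G be the normal closure of {βγ, (α,β)} where (x,y) = x⁻¹y⁻¹xy, and let (H,G) be the subgroup generated by all commutators (h,g) with h ∈ H, g ∈ G. Then for every w ∈ G there exists an integer k such that β·γ^w ≡ (βγ)·(α,β)^k modulo (H,G), i.e., (β·w⁻¹γw)·((βγ)·(α,β)^k)⁻¹ ∈ (H,G). -/

import Mathlib

/-- In the free group `G` on `α, β, γ`, with `H` the normal closure of
`{βγ, (α,β)}` and `(H,G)` the subgroup generated by commutators `(h,g)`,
`h ∈ H`, `g ∈ G` (where `(x,y) = x⁻¹y⁻¹xy`), for every `w ∈ G` there is an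
integer `k` with `β·γ^w ≡ (βγ)·(α,β)^k mod (H,G)`. -/
theorem beta_gamma_conjugate_congruence (w : FreeGroup (Fin 3)) :
    let α := FreeGroup.of (0 : Fin 3)
    let β := FreeGroup.of (1 : Fin 3)
    let γ := FreeGroup.of (2 : Fin 3)
    let H := Subgroup.normalClosure {β * γ, α⁻¹ * β⁻¹ * α * β}
    let HG := Subgroup.closure
      {x : FreeGroup (Fin 3) | ∃ h ∈ H, ∃ g : FreeGroup (Fin 3), x = h⁻¹ * g⁻¹ * h * g}
    ∃ k : ℤ, (β * (w⁻¹ * γ * w)) * ((β * γ) * (α⁻¹ * β⁻¹ * α * β) ^ k)⁻¹ ∈ HG := by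
  intro α β γ H HG
  have hHn : H.Normal := Subgroup.normalClosure_normal
  have htH : α⁻¹ * β⁻¹ * α * β ∈ H :=
    Subgroup.subset_normalClosure (Set.mem_insert_iff.mpr (Or.inr rfl))
  have hbgH : β * γ ∈ H := Subgroup.subset_normalClosure (Set.mem_insert _ _)
  -- generators of HG
  have hgen : ∀ h ∈ H, ∀ g : FreeGroup (Fin 3), h⁻¹ * g⁻¹ * h * g ∈ HG :=
    fun h hh g => Subgroup.subset_closure ⟨h, hh, g, rfl⟩
  -- HG is normal
  haveI hHGn : HG.Normal := by
    constructor
    intro x hx g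
    refine Subgroup.closure_induction
      (p := fun x _ => g * x * g⁻¹ ∈ HG) ?_ ?_ ?_ ?_ hx
    · rintro y ⟨h, hh, v, rfl⟩
      have e : g * (h⁻¹ * v⁻¹ * h * v) * g⁻¹ =
          (g * h * g⁻¹)⁻¹ * (g * v * g⁻¹)⁻¹ * (g * h * g⁻¹) * (g * v * g⁻¹) := by
        group
      rw [e]
      exact hgen _ (hHn.conj_mem h hh g) _
    · simpa using one_mem HG
    · intro x y _ _ hx hy
      have e : g * (x * y) * g⁻¹ = (g * x * g⁻¹) * (g * y * g⁻¹) := by group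
      rw [e]; exact mul_mem hx hy
    · intro x _ hx
      have e : g * x⁻¹ * g⁻¹ = (g * x * g⁻¹)⁻¹ := by group
      rw [e]; exact inv_mem hx
  -- work in the quotient Q = G ⧸ HG
  -- conjugation by anything fixes images of elements of H
  have conj_eq : ∀ x ∈ H, ∀ g : FreeGroup (Fin 3),
      ((g⁻¹ * x * g : FreeGroup (Fin 3)) : FreeGroup (Fin 3) ⧸ HG) = (x : FreeGroup (Fin 3) ⧸ HG) := by
    intro x hx g
    refine QuotientGroup.eq.mpr ?_
    have e : (g⁻¹ * x * g)⁻¹ * x = (g⁻¹ * x * g)⁻¹ * ((g⁻¹)⁻¹ * g⁻¹) * x := by group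
    have e2 : (g⁻¹ * x * g)⁻¹ * x = (x⁻¹ * g⁻¹ * x * g)⁻¹ := by group
    rw [e2]
    exact inv_mem (hgen x hx g)
  have comm_eq : ∀ x ∈ H, ∀ g : FreeGroup (Fin 3),
      ((x * g : FreeGroup (Fin 3)) : FreeGroup (Fin 3) ⧸ HG) = ((g * x : FreeGroup (Fin 3)) : FreeGroup (Fin 3) ⧸ HG) := by
    intro x hx g
    refine QuotientGroup.eq.mpr ?_
    have e : (x * g)⁻¹ * (g * x) = (x⁻¹ * g⁻¹ * x * g)⁻¹ := by group
    rw [e]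
    exact inv_mem (hgen x hx g)
  -- the key induction: c(x) = β x⁻¹ β⁻¹ x lies in H and is congruent to t^k mod HG
  have key : ∀ x : FreeGroup (Fin 3),
      (β * x⁻¹ * β⁻¹ * x ∈ H) ∧ ∃ k : ℤ,
        ((β * x⁻¹ * β⁻¹ * x : FreeGroup (Fin 3)) : FreeGroup (Fin 3) ⧸ HG)
          = ((α⁻¹ * β⁻¹ * α * β : FreeGroup (Fin 3)) : FreeGroup (Fin 3) ⧸ HG) ^ k := by
    intro x
    induction x using FreeGroup.induction_on with
    | C1 =>
      constructor
      · simpa using one_mem H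
      · refine ⟨0, ?_⟩
        simp
    | of i =>
      fin_cases i
      · -- i = 0, generator α
        have e : β * α⁻¹ * β⁻¹ * α = β * (α⁻¹ * β⁻¹ * α * β) * β⁻¹ := by group
        constructor
        · show β * α⁻¹ * β⁻¹ * α ∈ H
          rw [e]; exact hHn.conj_mem _ htH β
        · refine ⟨1, ?_⟩
          show ((β * α⁻¹ * β⁻¹ * α : FreeGroup (Fin 3)) : FreeGroup (Fin 3) ⧸ HG) = _
          rw [e, zpow_one]
          have e2 : β * (α⁻¹ * β⁻¹ * α * β) * β⁻¹ = (β⁻¹)⁻¹ * (α⁻¹ * β⁻¹ * α * β) * β⁻¹ := by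
            group
          rw [e2]
          exact conj_eq _ htH β⁻¹
      · -- i = 1, generator β
        constructor
        · show β * β⁻¹ * β⁻¹ * β ∈ H
          have e : β * β⁻¹ * β⁻¹ * β = 1 := by group
          rw [e]; exact one_mem H
        · refine ⟨0, ?_⟩
          show ((β * β⁻¹ * β⁻¹ * β : FreeGroup (Fin 3)) : FreeGroup (Fin 3) ⧸ HG) = _
          have e : β * β⁻¹ * β⁻¹ * β = 1 := by group
          rw [e]; simp
      · -- i = 2, generator γ
        have e : β * γ⁻¹ * β⁻¹ * γ = (β * (β * γ)⁻¹ * β⁻¹) * (β * γ) := by group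
        constructor
        · show β * γ⁻¹ * β⁻¹ * γ ∈ H
          rw [e]
          exact mul_mem (hHn.conj_mem _ (inv_mem hbgH) β) hbgH
        · refine ⟨0, ?_⟩
          show ((β * γ⁻¹ * β⁻¹ * γ : FreeGroup (Fin 3)) : FreeGroup (Fin 3) ⧸ HG) = _
          rw [zpow_zero]
          refine (QuotientGroup.eq_one_iff _).mpr ?_
          have e2 : β * γ⁻¹ * β⁻¹ * γ = ((β * γ)⁻¹ * (β⁻¹)⁻¹ * (β * γ) * β⁻¹)⁻¹ := by group
          rw [e2]
          exact inv_mem (hgen _ hbgH β⁻¹)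
    | inv_of i ih =>
      obtain ⟨hmem, k, hk⟩ := ih
      set y : FreeGroup (Fin 3) := FreeGroup.of i with hy
      have e : β * (y⁻¹)⁻¹ * β⁻¹ * y⁻¹ = y * (β * y⁻¹ * β⁻¹ * y)⁻¹ * y⁻¹ := by group
      constructor
      · rw [e]
        have := hHn.conj_mem _ (inv_mem hmem) y
        simpa using this
      · refine ⟨-k, ?_⟩
        rw [e]
        have e2 : y * (β * y⁻¹ * β⁻¹ * y)⁻¹ * y⁻¹ = (y⁻¹)⁻¹ * (β * y⁻¹ * β⁻¹ * y)⁻¹ * y⁻¹ := by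
          group
        rw [e2, conj_eq _ (inv_mem hmem) y⁻¹]
        rw [show ((β * y⁻¹ * β⁻¹ * y)⁻¹ : FreeGroup (Fin 3)) =
          ((β * y⁻¹ * β⁻¹ * y : FreeGroup (Fin 3)))⁻¹ from rfl]
        rw [QuotientGroup.mk_inv, hk, ← zpow_neg]
    | mul x y ihx ihy =>
      obtain ⟨hmx, kx, hkx⟩ := ihx
      obtain ⟨hmy, ky, hky⟩ := ihy
      have e : β * (x * y)⁻¹ * β⁻¹ * (x * y)
          = (β * y⁻¹ * β⁻¹ * y) * (y⁻¹ * (β * x⁻¹ * β⁻¹ * x) * y) := by group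
      constructor
      · rw [e]
        refine mul_mem hmy ?_
        have := hHn.conj_mem _ hmx y⁻¹
        simpa using this
      · refine ⟨ky + kx, ?_⟩
        rw [e, QuotientGroup.mk_mul, conj_eq _ hmx y, hky, hkx, zpow_add]
  -- assemble
  obtain ⟨hmw, k, hk⟩ := key w
  refine ⟨k, ?_⟩
  refine (QuotientGroup.eq_one_iff _).mp ?_
  rw [QuotientGroup.mk_mul, QuotientGroup.mk_inv, mul_inv_eq_one]
  have e : β * (w⁻¹ * γ * w) = (β * w⁻¹ * β⁻¹ * w) * (w⁻¹ * (β * γ) * w) := by group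
  rw [e, QuotientGroup.mk_mul, conj_eq _ hbgH w, hk, ← QuotientGroup.mk_zpow,
    ← QuotientGroup.mk_mul]
  exact comm_eq _ (Subgroup.zpow_mem H htH k) (β * γ)
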